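/- The vector-valued rational function Y₂(z) = Σ_{k=1}^{3} M_k/(z − z_k) satisfies the KZ system with ρ = −1, i.e. Y₂'(z) = −A(z)·Y₂(z) for all z ∈ ℂ ∖ {z₁, z₂, z₃}. -/

import Mathlib

noncomputable section
open Matrix Polynomial

/-- The 4×4 permutation matrix (over ℂ) of the transposition exchanging coordinates `i` and `j`. -/
def permMat (i j : Fin 4) : Matrix (Fin 4) (Fin 4) ℂ :=
  Matrix.of fun k l => if l = Equiv.swap i j k then 1 else 0

/-- `P₁ = P(1,2)`. -/
def P1 : Matrix (Fin 4) (Fin 4) ℂ := permMat 0 1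
/-- `P₂ = P(1,3)`. -/
def P2 : Matrix (Fin 4) (Fin 4) ℂ := permMat 0 2
/-- `P₃ = P(1,4)`. -/
def P3 : Matrix (Fin 4) (Fin 4) ℂ := permMat 0 3

/-- `A(z) = Σ_{k=1}^{3} P_k/(z − z_k)`. -/
def Amat (z₁ z₂ z₃ z : ℂ) : Matrix (Fin 4) (Fin 4) ℂ :=
  (z - z₁)⁻¹ • P1 + (z - z₂)⁻¹ • P2 + (z - z₃)⁻¹ • P3

/-- `M_k = β_k·(1,1,1,1)ᵀ`, `β₁ = z₂ − z₃`, `β₂ = z₃ − z₁`, `β₃ = z₁ − z₂`. -/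
def M1 (z₁ z₂ z₃ : ℂ) : Fin 4 → ℂ := (z₂ - z₃) • ![1, 1, 1, 1]
def M2 (z₁ z₂ z₃ : ℂ) : Fin 4 → ℂ := (z₃ - z₁) • ![1, 1, 1, 1]
def M3 (z₁ z₂ z₃ : ℂ) : Fin 4 → ℂ := (z₁ - z₂) • ![1, 1, 1, 1]
/-- `Y₂(z) = Σ_{k=1}^{3} M_k/(z − z_k)`. -/
def Y2 (z₁ z₂ z₃ z : ℂ) : Fin 4 → ℂ :=
  (z - z₁)⁻¹ • M1 z₁ z₂ z₃ + (z - z₂)⁻¹ • M2 z₁ z₂ z₃ + (z - z₃)⁻¹ • M3 z₁ z₂ z₃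

/-- `Y₂` satisfies `Y₂' = −A·Y₂` on `ℂ ∖ {z₁,z₂,z₃}`. -/
theorem stmt_1 (z₁ z₂ z₃ : ℂ) (h12 : z₁ ≠ z₂) (h13 : z₁ ≠ z₃) (h23 : z₂ ≠ z₃) :
    ∀ z : ℂ, z ≠ z₁ → z ≠ z₂ → z ≠ z₃ →
      HasDerivAt (fun w => Y2 z₁ z₂ z₃ w) (-(Amat z₁ z₂ z₃ z *ᵥ Y2 z₁ z₂ z₃ z)) z := by
  intro z hz1 hz2 hz3
  have d1 : z - z₁ ≠ 0 := sub_ne_zero.mpr hz1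
  have d2 : z - z₂ ≠ 0 := sub_ne_zero.mpr hz2
  have d3 : z - z₃ ≠ 0 := sub_ne_zero.mpr hz3
  have hinv : ∀ a : ℂ, z - a ≠ 0 →
      HasDerivAt (fun w : ℂ => (w - a)⁻¹) (-1 / (z - a) ^ 2) z := by
    intro a ha
    have h0 := ((hasDerivAt_id z).sub_const a).inv ha
    simp at h0
    exact h0
  have h : HasDerivAt (fun w => Y2 z₁ z₂ z₃ w)
      ((-1 / (z - z₁) ^ 2) • M1 z₁ z₂ z₃ + (-1 / (z - z₂) ^ 2) • M2 z₁ z₂ z₃ +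
        (-1 / (z - z₃) ^ 2) • M3 z₁ z₂ z₃) z := by
    unfold Y2
    exact (((hinv z₁ d1).smul_const _).add ((hinv z₂ d2).smul_const _)).add
      ((hinv z₃ d3).smul_const _)
  have hones : (![1, 1, 1, 1] : Fin 4 → ℂ) = fun _ => 1 := by
    funext k; fin_cases k <;> rfl
  have hperm : ∀ i j : Fin 4, permMat i j *ᵥ (fun _ => (1 : ℂ)) = fun _ => (1 : ℂ) := by
    intro i j
    funext k
    simp [permMat, Matrix.mulVec, dotProduct]
  set v : Fin 4 → ℂ := fun _ => 1 with hv
  set c : ℂ := (z - z₁)⁻¹ * (z₂ - z₃) + (z - z₂)⁻¹ * (z₃ - z₁) + (z - z₃)⁻¹ * (z₁ - z₂)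
    with hc
  have hY : Y2 z₁ z₂ z₃ z = c • v := by
    simp only [Y2, M1, M2, M3, hones, smul_smul, hc]
    rw [add_smul, add_smul]
  have hAY : Amat z₁ z₂ z₃ z *ᵥ Y2 z₁ z₂ z₃ z
      = (c * ((z - z₁)⁻¹ + (z - z₂)⁻¹ + (z - z₃)⁻¹)) • v := by
    rw [hY]
    simp only [Amat, P1, P2, P3, Matrix.mulVec_smul, Matrix.add_mulVec,
      Matrix.smul_mulVec, hperm, smul_smul]
    rw [← add_smul, ← add_smul, smul_smul]
  have hD : (-1 / (z - z₁) ^ 2) • M1 z₁ z₂ z₃ + (-1 / (z - z₂) ^ 2) • M2 z₁ z₂ z₃ +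
      (-1 / (z - z₃) ^ 2) • M3 z₁ z₂ z₃
      = (-1 / (z - z₁) ^ 2 * (z₂ - z₃) + -1 / (z - z₂) ^ 2 * (z₃ - z₁) +
          -1 / (z - z₃) ^ 2 * (z₁ - z₂)) • v := by
    simp only [M1, M2, M3, hones, smul_smul]
    rw [add_smul, add_smul]
  have key : -1 / (z - z₁) ^ 2 * (z₂ - z₃) + -1 / (z - z₂) ^ 2 * (z₃ - z₁) +
      -1 / (z - z₃) ^ 2 * (z₁ - z₂)
      = -(c * ((z - z₁)⁻¹ + (z - z₂)⁻¹ + (z - z₃)⁻¹)) := by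
    rw [hc]
    field_simp
    ring
  rw [hAY, ← neg_smul, ← key, ← hD]
  exact h
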